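/- Let R be a finite commutative ring with J(R) ≠ 0 and R/J(R) ≅ ℤ/2 ⊕ ℤ/2. Then the Jacobson graph of R contains a cycle of length 3 but contains no induced cycle of length greater than 3. -/

import Mathlib

open scoped Classical

/-- The Jacobson graph of a commutative ring `R`. -/
def jacobsonGraph (R : Type*) [CommRing R] :
    SimpleGraph {x : R // x ∉ Ideal.jacobson (⊥ : Ideal R)} where
  Adj x y := x ≠ y ∧ ¬ IsUnit (1 - (x : R) * y)
  symm := by
    constructor
    rintro x y ⟨h1, h2⟩
    exact ⟨h1.symm, by rwa [mul_comm] at h2⟩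
  loopless := ⟨fun x ⟨h, _⟩ => h rfl⟩

/-- An induced (chordless) cycle in a simple graph. -/
def IsInducedCycle {V : Type*} {G : SimpleGraph V} {u : V} (p : G.Walk u u) : Prop :=
  p.IsCycle ∧ ∀ x ∈ p.support, ∀ y ∈ p.support, G.Adj x y → s(x, y) ∈ p.edges

/-- An induced (chordless) path in a simple graph. -/
def IsInducedPath {V : Type*} {G : SimpleGraph V} {u v : V} (p : G.Walk u v) : Prop :=
  p.IsPath ∧ ∀ x ∈ p.support, ∀ y ∈ p.support, G.Adj x y → s(x, y) ∈ p.edges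

private lemma klein1 : ∀ z y : ZMod 2 × ZMod 2, z * y = 1 → z = 1 := by decide

private lemma klein2 : ∀ a b c : ZMod 2 × ZMod 2, a ≠ 0 → b ≠ 0 → c ≠ 0 →
    a*b = 0 → c*a ≠ 0 → c*b ≠ 0 → c = 1 := by decide

private lemma klein3 : ∀ c d : ZMod 2 × ZMod 2, c = 1 → d ≠ 0 → c*d ≠ 0 := by decide

section Aux

variable {R : Type*} [CommRing R]

private lemma aux_unit_iff (φ : R →+* ZMod 2 × ZMod 2)
    (hker : ∀ x : R, φ x = 0 ↔ x ∈ Ideal.jacobson (⊥ : Ideal R)) (x : R) :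
    IsUnit x ↔ φ x = 1 := by
  constructor
  · intro hx
    obtain ⟨y, hy⟩ := (hx.map φ).exists_right_inv
    exact klein1 _ _ hy
  · intro hx
    have h1 : x - 1 ∈ Ideal.jacobson (⊥ : Ideal R) := by
      rw [← hker]; simp [hx]
    have := (Ideal.mem_jacobson_bot.mp h1) 1
    simpa using this

private lemma aux_adj (φ : R →+* ZMod 2 × ZMod 2)
    (hker : ∀ x : R, φ x = 0 ↔ x ∈ Ideal.jacobson (⊥ : Ideal R))
    (x y : {x : R // x ∉ Ideal.jacobson (⊥ : Ideal R)}) :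
    (jacobsonGraph R).Adj x y ↔ x ≠ y ∧ φ (x : R) * φ (y : R) ≠ 0 := by
  have : (¬ IsUnit (1 - (x : R) * y)) ↔ φ (x : R) * φ (y : R) ≠ 0 := by
    rw [aux_unit_iff φ hker]
    simp only [map_sub, map_one, map_mul]
    constructor
    · intro h h0
      exact h (by rw [h0, sub_zero])
    · intro h h1
      exact h (by linear_combination -h1)
  exact and_congr Iff.rfl this

private lemma aux_nonzero (φ : R →+* ZMod 2 × ZMod 2)
    (hker : ∀ x : R, φ x = 0 ↔ x ∈ Ideal.jacobson (⊥ : Ideal R))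
    (x : {x : R // x ∉ Ideal.jacobson (⊥ : Ideal R)}) :
    φ (x : R) ≠ 0 := fun h => x.2 ((hker _).mp h)

end Aux

/-- If R is a finite commutative ring with J(R) ≠ 0 and
R/J(R) ≅ ℤ/2 ⊕ ℤ/2, then the Jacobson graph of R contains a cycle of length 3, but no
induced cycle of length greater than 3. -/
theorem jacobsonGraph_triangle_of_quotient_klein
    (R : Type*) [CommRing R] [Finite R]
    (hJ : Ideal.jacobson (⊥ : Ideal R) ≠ ⊥)
    (hq : Nonempty ((R ⧸ Ideal.jacobson (⊥ : Ideal R)) ≃+* (ZMod 2 × ZMod 2))) :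
    (∃ (u : {x : R // x ∉ Ideal.jacobson (⊥ : Ideal R)})
      (p : (jacobsonGraph R).Walk u u), p.IsCycle ∧ p.length = 3) ∧
    ∀ (u : {x : R // x ∉ Ideal.jacobson (⊥ : Ideal R)})
      (p : (jacobsonGraph R).Walk u u), IsInducedCycle p → p.length ≤ 3 := by
  obtain ⟨e⟩ := hq
  set φ : R →+* ZMod 2 × ZMod 2 :=
    e.toRingHom.comp (Ideal.Quotient.mk (Ideal.jacobson (⊥ : Ideal R))) with hφdef
  have hker : ∀ x : R, φ x = 0 ↔ x ∈ Ideal.jacobson (⊥ : Ideal R) := by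
    intro x
    rw [hφdef]
    simp only [RingHom.comp_apply, RingEquiv.toRingHom_eq_coe, RingHom.coe_coe]
    rw [EmbeddingLike.map_eq_zero_iff, Ideal.Quotient.eq_zero_iff_mem]
  have hsurj : Function.Surjective φ := e.surjective.comp Ideal.Quotient.mk_surjective
  have hadj := aux_adj φ hker
  have hnz := aux_nonzero φ hker
  constructor
  · -- a triangle exists
    obtain ⟨j, hjJ, hj0⟩ := Submodule.exists_mem_ne_zero_of_ne_bot hJ
    obtain ⟨c, hc⟩ := hsurj 1
    obtain ⟨a, ha⟩ := hsurj (1, 0)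
    have hcj : φ (c + j) = 1 := by
      rw [map_add, hc, (hker j).mpr hjJ, add_zero]
    have hcJ : c ∉ Ideal.jacobson (⊥ : Ideal R) := fun h => by
      simp [(hker c).mpr h] at hc
    have hcjJ : c + j ∉ Ideal.jacobson (⊥ : Ideal R) := fun h => by
      simp [(hker _).mpr h] at hcj
    have haJ : a ∉ Ideal.jacobson (⊥ : Ideal R) := fun h => by
      rw [(hker a).mpr h] at ha
      exact one_ne_zero (congrArg Prod.fst ha.symm)
    set A : {x : R // x ∉ Ideal.jacobson (⊥ : Ideal R)} := ⟨c, hcJ⟩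
    set B : {x : R // x ∉ Ideal.jacobson (⊥ : Ideal R)} := ⟨c + j, hcjJ⟩
    set C : {x : R // x ∉ Ideal.jacobson (⊥ : Ideal R)} := ⟨a, haJ⟩
    have hAB : (jacobsonGraph R).Adj A B := by
      rw [hadj]
      refine ⟨?_, ?_⟩
      · simp only [A, B, ne_eq, Subtype.mk.injEq]
        intro h
        exact hj0 (left_eq_add.mp h)
      · show φ c * φ (c + j) ≠ 0
        rw [hc, hcj]; simp
    have hBC : (jacobsonGraph R).Adj B C := by
      rw [hadj]
      refine ⟨?_, ?_⟩
      · simp only [B, C, ne_eq, Subtype.mk.injEq]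
        intro h; rw [h, ha] at hcj; exact absurd hcj (by decide)
      · show φ (c + j) * φ a ≠ 0
        rw [hcj, ha]; decide
    have hCA : (jacobsonGraph R).Adj C A := by
      rw [hadj]
      refine ⟨?_, ?_⟩
      · simp only [C, A, ne_eq, Subtype.mk.injEq]
        intro h; rw [h, hc] at ha; exact absurd ha (by decide)
      · show φ a * φ c ≠ 0
        rw [ha, hc]; decide
    refine ⟨A, SimpleGraph.Walk.cons hAB (SimpleGraph.Walk.cons hBC
      (SimpleGraph.Walk.cons hCA SimpleGraph.Walk.nil)), ?_, rfl⟩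
    rw [SimpleGraph.Walk.isCycle_def]
    refine ⟨?_, by simp, ?_⟩
    · rw [SimpleGraph.Walk.isTrail_def]
      simp [Sym2.eq_iff, hAB.ne, hAB.ne', hBC.ne, hBC.ne', hCA.ne, hCA.ne']
    · simp [Sym2.eq_iff, hAB.ne, hAB.ne', hBC.ne, hBC.ne', hCA.ne, hCA.ne']
  · -- no induced cycle of length > 3
    intro u p hp
    by_contra hlen
    push_neg at hlen
    obtain ⟨hcyc, hind⟩ := hp
    cases p with
    | nil => simp at hlen
    | cons h01 q =>
      rename_i v1
      cases q with
      | nil => simp at hlen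
      | cons h12 q =>
        rename_i v2
        cases q with
        | nil => simp at hlen
        | cons h23 q =>
          rename_i v3
          cases q with
          | nil => simp [SimpleGraph.Walk.length_cons] at hlen
          | cons h34 r =>
            rename_i v4
            rw [SimpleGraph.Walk.isCycle_def] at hcyc
            obtain ⟨_, _, hnd⟩ := hcyc
            simp only [SimpleGraph.Walk.support_cons, List.tail_cons, List.nodup_cons,
              List.mem_cons] at hnd
            push_neg at hnd
            obtain ⟨⟨h12', h13', h1r⟩, ⟨h23', h2r⟩, h3r, _⟩ := hnd
            have humem : u ∈ r.support := r.end_mem_support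
            have hv4mem : v4 ∈ r.support := r.start_mem_support
            have hu2 : u ≠ v2 := fun h => h2r (h ▸ humem)
            have hu3 : u ≠ v3 := fun h => h3r (h ▸ humem)
            have h14 : v1 ≠ v4 := fun h => h1r (h ▸ hv4mem)
            have h01' := h01.ne
            have h12'' := h12.ne
            have hmem : ∀ x : {x : R // x ∉ Ideal.jacobson (⊥ : Ideal R)},
                x ∈ (SimpleGraph.Walk.cons h01 (SimpleGraph.Walk.cons h12
                  (SimpleGraph.Walk.cons h23 (SimpleGraph.Walk.cons h34 r)))).support ↔
                (x = u ∨ x = v1 ∨ x = v2 ∨ x = v3 ∨ x ∈ r.support) := by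
              intro x
              simp [SimpleGraph.Walk.support_cons]
            have hedges : (SimpleGraph.Walk.cons h01 (SimpleGraph.Walk.cons h12
                (SimpleGraph.Walk.cons h23 (SimpleGraph.Walk.cons h34 r)))).edges =
                s(u, v1) :: s(v1, v2) :: s(v2, v3) :: s(v3, v4) :: r.edges := by
              simp [SimpleGraph.Walk.edges_cons]
            have hchord1 : ¬ (jacobsonGraph R).Adj u v2 := by
              intro hA
              have hmm := hind u ((hmem u).mpr (Or.inl rfl)) v2
                ((hmem v2).mpr (Or.inr (Or.inr (Or.inl rfl)))) hA
              rw [hedges] at hmm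
              simp only [List.mem_cons, Sym2.eq_iff] at hmm
              rcases hmm with h | h | h | h | h
              · rcases h with ⟨_, h⟩ | ⟨h, _⟩
                · exact h12' h.symm
                · exact h01' h
              · rcases h with ⟨h, _⟩ | ⟨h, _⟩
                · exact h01' h
                · exact hu2 h
              · rcases h with ⟨h, _⟩ | ⟨h, _⟩
                · exact hu2 h
                · exact hu3 h
              · rcases h with ⟨h, _⟩ | ⟨_, h⟩
                · exact hu3 h
                · exact h23' h
              · exact h2r (SimpleGraph.Walk.snd_mem_support_of_mem_edges r h)
            have hchord2 : ¬ (jacobsonGraph R).Adj v1 v3 := by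
              intro hA
              have hmm := hind v1 ((hmem v1).mpr (Or.inr (Or.inl rfl))) v3
                ((hmem v3).mpr (Or.inr (Or.inr (Or.inr (Or.inl rfl))))) hA
              rw [hedges] at hmm
              simp only [List.mem_cons, Sym2.eq_iff] at hmm
              rcases hmm with h | h | h | h | h
              · rcases h with ⟨h, _⟩ | ⟨_, h⟩
                · exact h01' h.symm
                · exact hu3 h.symm
              · rcases h with ⟨_, h⟩ | ⟨h, _⟩
                · exact h23' h.symm
                · exact h12' h
              · rcases h with ⟨h, _⟩ | ⟨h, _⟩
                · exact h12' h
                · exact h13' h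
              · rcases h with ⟨h, _⟩ | ⟨h, _⟩
                · exact h13' h
                · exact h14 h
              · exact h1r (SimpleGraph.Walk.fst_mem_support_of_mem_edges r h)
            -- algebraic contradiction
            have e1 : φ (u : R) * φ (v2 : R) = 0 := by
              by_contra h
              exact hchord1 ((hadj u v2).mpr ⟨hu2, h⟩)
            have e2 : φ (v1 : R) * φ (v3 : R) = 0 := by
              by_contra h
              exact hchord2 ((hadj v1 v3).mpr ⟨h13', h⟩)
            have n1 : φ (u : R) * φ (v1 : R) ≠ 0 := ((hadj u v1).mp h01).2
            have n2 : φ (v1 : R) * φ (v2 : R) ≠ 0 := ((hadj v1 v2).mp h12).2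
            have hc1 : φ (v1 : R) = 1 :=
              klein2 (φ u) (φ v2) (φ v1) (hnz u) (hnz v2) (hnz v1) e1
                (by rwa [mul_comm] at n1) n2
            exact klein3 (φ (v1 : R)) (φ (v3 : R)) hc1 (hnz v3) e2
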